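/- Under the hypotheses of the block S-node (A lower block triangular with blocks A₁₁, A₂₁, A₂₂; S, Π satisfying A S − S A* = Π J̆ Π*, with S and S₁₁ invertible), the transfer matrix w_A(λ) = I₂ − J̆ Π* S⁻¹ (A − λI)⁻¹ Π factors as w_A(λ) = w₂(λ) w₁(λ), where w₁(λ) = I₂ − J̆ Π* P₁* S₁₁⁻¹ (A₁₁ − λI)⁻¹ P₁ Π and w₂(λ) = I₂ − J̆ Π* S⁻¹ P₂* (A₂₂ − λI)⁻¹ T₂₂⁻¹ P₂ S⁻¹ Π, with T₂₂ the lower-right block of S⁻¹ and P₁ = [I, 0], P₂ = [0, I]. -/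

import Mathlib

open Matrix

lemma fromBlocks_sub' {R : Type*} [Sub R] {n o l m : Type*}
    (A : Matrix n l R) (B : Matrix n m R) (C : Matrix o l R) (D : Matrix o m R)
    (A' : Matrix n l R) (B' : Matrix n m R) (C' : Matrix o l R) (D' : Matrix o m R) :
    Matrix.fromBlocks A B C D - Matrix.fromBlocks A' B' C' D' =
      Matrix.fromBlocks (A - A') (B - B') (C - C') (D - D') := by
  ext i j; rcases i with i | i <;> rcases j with j | j <;> rfl

set_option maxHeartbeats 1600000 in
/-- Factorization of the transfer matrix function for a block lower triangular A:
w_A(λ) = w₂(λ) w₁(λ). -/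
theorem stmt_7 {n₁ n₂ : ℕ}
    (A₁₁ : Matrix (Fin n₁) (Fin n₁) ℂ) (A₂₁ : Matrix (Fin n₂) (Fin n₁) ℂ)
    (A₂₂ : Matrix (Fin n₂) (Fin n₂) ℂ)
    (S : Matrix (Fin n₁ ⊕ Fin n₂) (Fin n₁ ⊕ Fin n₂) ℂ)
    (B : Matrix (Fin n₁ ⊕ Fin n₂) (Fin 2) ℂ)
    (J : Matrix (Fin 2) (Fin 2) ℂ) (hJ : J = !![0, 1; -1, 0])
    (A : Matrix (Fin n₁ ⊕ Fin n₂) (Fin n₁ ⊕ Fin n₂) ℂ)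
    (hA : A = fromBlocks A₁₁ 0 A₂₁ A₂₂)
    (lam : ℂ)
    (hS : IsUnit S.det) (hS₁₁ : IsUnit S.toBlocks₁₁.det)
    (hl₁ : IsUnit (A₁₁ - lam • (1 : Matrix (Fin n₁) (Fin n₁) ℂ)).det)
    (hl₂ : IsUnit (A₂₂ - lam • (1 : Matrix (Fin n₂) (Fin n₂) ℂ)).det)
    (hid : A * S - S * Aᴴ = B * J * Bᴴ)
    (P₁ : Matrix (Fin n₁) (Fin n₁ ⊕ Fin n₂) ℂ) (hP₁ : P₁ = fromCols 1 0)
    (P₂ : Matrix (Fin n₂) (Fin n₁ ⊕ Fin n₂) ℂ) (hP₂ : P₂ = fromCols 0 1)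
    (T₂₂ : Matrix (Fin n₂) (Fin n₂) ℂ) (hT : T₂₂ = (S⁻¹).toBlocks₂₂) :
    (1 : Matrix (Fin 2) (Fin 2) ℂ)
        - J * Bᴴ * S⁻¹ * (A - lam • (1 : Matrix (Fin n₁ ⊕ Fin n₂) (Fin n₁ ⊕ Fin n₂) ℂ))⁻¹ * B
    = ((1 : Matrix (Fin 2) (Fin 2) ℂ)
        - J * Bᴴ * S⁻¹ * P₂ᴴ
          * (A₂₂ - lam • (1 : Matrix (Fin n₂) (Fin n₂) ℂ))⁻¹ * T₂₂⁻¹ * (P₂ * (S⁻¹ * B)))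
      * ((1 : Matrix (Fin 2) (Fin 2) ℂ)
        - J * Bᴴ * P₁ᴴ * S.toBlocks₁₁⁻¹
          * (A₁₁ - lam • (1 : Matrix (Fin n₁) (Fin n₁) ℂ))⁻¹ * (P₁ * B)) := by
  subst hA hP₁ hP₂ hT
  obtain ⟨B₁, B₂, rfl⟩ : ∃ B₁ B₂, B = fromRows B₁ B₂ := ⟨_, _, (fromRows_toRows B).symm⟩
  obtain ⟨S₁₁, S₁₂, S₂₁, S₂₂, rfl⟩ : ∃ a b c d, S = fromBlocks a b c d :=
    ⟨_, _, _, _, (fromBlocks_toBlocks S).symm⟩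
  simp only [toBlocks_fromBlocks₁₁] at hS₁₁ ⊢
  obtain ⟨T₁₁, T₁₂, T₂₁, T₂₂, hT⟩ :
      ∃ a b c d, (fromBlocks S₁₁ S₁₂ S₂₁ S₂₂)⁻¹ = fromBlocks a b c d :=
    ⟨_, _, _, _, (fromBlocks_toBlocks _).symm⟩
  set E₁ := A₁₁ - lam • (1 : Matrix (Fin n₁) (Fin n₁) ℂ) with hE₁def
  set E₂ := A₂₂ - lam • (1 : Matrix (Fin n₂) (Fin n₂) ℂ) with hE₂def
  have hE₁R : E₁ * E₁⁻¹ = 1 := mul_nonsing_inv _ hl₁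
  have hR₁E : E₁⁻¹ * E₁ = 1 := nonsing_inv_mul _ hl₁
  have hE₂R : E₂ * E₂⁻¹ = 1 := mul_nonsing_inv _ hl₂
  have hR₂E : E₂⁻¹ * E₂ = 1 := nonsing_inv_mul _ hl₂
  have hW1 : S₁₁ * S₁₁⁻¹ = 1 := mul_nonsing_inv _ hS₁₁
  have hW2 : S₁₁⁻¹ * S₁₁ = 1 := nonsing_inv_mul _ hS₁₁
  have hSr : fromBlocks S₁₁ S₁₂ S₂₁ S₂₂ * fromBlocks T₁₁ T₁₂ T₂₁ T₂₂ = 1 := by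
    rw [← hT]; exact mul_nonsing_inv _ hS
  have hSl : fromBlocks T₁₁ T₁₂ T₂₁ T₂₂ * fromBlocks S₁₁ S₁₂ S₂₁ S₂₂ = 1 := by
    rw [← hT]; exact nonsing_inv_mul _ hS
  rw [fromBlocks_multiply, ← fromBlocks_one, fromBlocks_inj] at hSr hSl
  obtain ⟨s11, s12, s21, s22⟩ := hSr
  obtain ⟨t11, t12, t21, t22⟩ := hSl
  -- extract the block identities from hid
  rw [conjTranspose_fromRows_eq_fromCols_conjTranspose, fromBlocks_conjTranspose,
    conjTranspose_zero, fromBlocks_multiply, fromBlocks_multiply, fromBlocks_sub',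
    fromRows_mul, fromRows_mul_fromCols, fromBlocks_inj] at hid
  obtain ⟨hid11, -, hid21, -⟩ := hid
  rw [Matrix.zero_mul, Matrix.mul_zero, add_zero, add_zero] at hid11
  rw [Matrix.mul_zero, add_zero] at hid21
  have hS11A : S₁₁ * A₁₁ᴴ = A₁₁ * S₁₁ - B₁ * J * B₁ᴴ := by rw [← hid11]; abel
  have hA22S : A₂₂ * S₂₁ = B₂ * J * B₁ᴴ - A₂₁ * S₁₁ + S₂₁ * A₁₁ᴴ := by rw [← hid21]; abel
  -- relations among the blocks of S⁻¹
  have hT21 : T₂₁ = -(T₂₂ * (S₂₁ * S₁₁⁻¹)) := by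
    have h : T₂₁ * S₁₁ = -(T₂₂ * S₂₁) := eq_neg_of_add_eq_zero_left t21
    calc T₂₁ = T₂₁ * S₁₁ * S₁₁⁻¹ := by rw [Matrix.mul_assoc, hW1, Matrix.mul_one]
    _ = -(T₂₂ * S₂₁) * S₁₁⁻¹ := by rw [h]
    _ = -(T₂₂ * (S₂₁ * S₁₁⁻¹)) := by rw [Matrix.neg_mul, Matrix.mul_assoc]
  have hT11 : T₁₁ = S₁₁⁻¹ - T₁₂ * (S₂₁ * S₁₁⁻¹) := by
    have h : T₁₁ * S₁₁ = 1 - T₁₂ * S₂₁ := by rw [← t11]; abel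
    calc T₁₁ = T₁₁ * S₁₁ * S₁₁⁻¹ := by rw [Matrix.mul_assoc, hW1, Matrix.mul_one]
    _ = (1 - T₁₂ * S₂₁) * S₁₁⁻¹ := by rw [h]
    _ = S₁₁⁻¹ - T₁₂ * (S₂₁ * S₁₁⁻¹) := by
        rw [Matrix.sub_mul, Matrix.one_mul, Matrix.mul_assoc]
  -- invertibility of T₂₂ and its inverse
  have hT22S : T₂₂ * (S₂₁ * S₁₁⁻¹) = -T₂₁ := by rw [hT21, neg_neg]
  have hTK : T₂₂ * (S₂₂ - S₂₁ * S₁₁⁻¹ * S₁₂) = 1 := by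
    rw [Matrix.mul_sub, ← Matrix.mul_assoc T₂₂, hT22S,
      Matrix.neg_mul, sub_neg_eq_add, add_comm]
    exact t22
  have hKT : (S₂₂ - S₂₁ * S₁₁⁻¹ * S₁₂) * T₂₂ = 1 := by
    have h2 : S₁₂ * T₂₂ = -(S₁₁ * T₁₂) := eq_neg_of_add_eq_zero_right s12
    rw [Matrix.sub_mul, Matrix.mul_assoc (S₂₁ * S₁₁⁻¹) S₁₂ T₂₂, h2, Matrix.mul_neg,
      Matrix.mul_assoc S₂₁ S₁₁⁻¹ (S₁₁ * T₁₂), ← Matrix.mul_assoc S₁₁⁻¹ S₁₁ T₁₂, hW2,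
      Matrix.one_mul, sub_neg_eq_add, add_comm]
    exact s22
  have hVeq : T₂₂⁻¹ = S₂₂ - S₂₁ * S₁₁⁻¹ * S₁₂ := inv_eq_right_inv hTK
  have hVT : T₂₂⁻¹ * T₂₂ = 1 := by rw [hVeq]; exact hKT
  -- monomial rewrite rules
  have g2 : ∀ (Z : Matrix (Fin n₂) (Fin 2) ℂ), T₂₂⁻¹ * (T₂₂ * Z) = Z := by
    intro Z; rw [← Matrix.mul_assoc, hVT, Matrix.one_mul]
  have g4 : ∀ (Z : Matrix (Fin n₁) (Fin 2) ℂ), T₂₁ * Z = -(T₂₂ * (S₂₁ * (S₁₁⁻¹ * Z))) := by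
    intro Z
    rw [hT21, Matrix.neg_mul, Matrix.mul_assoc, Matrix.mul_assoc]
  have g3 : ∀ (Z : Matrix (Fin n₁) (Fin 2) ℂ),
      T₁₁ * Z = S₁₁⁻¹ * Z - T₁₂ * (S₂₁ * (S₁₁⁻¹ * Z)) := by
    intro Z
    rw [hT11, Matrix.sub_mul, Matrix.mul_assoc, Matrix.mul_assoc]
  -- the two S-node identities, pushed through inverses
  have hu : A₁₁ * (E₁⁻¹ * B₁) - lam • (E₁⁻¹ * B₁) = B₁ := by
    calc A₁₁ * (E₁⁻¹ * B₁) - lam • (E₁⁻¹ * B₁)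
        = (A₁₁ - lam • 1) * (E₁⁻¹ * B₁) := by
          rw [Matrix.sub_mul, Matrix.smul_mul, Matrix.one_mul]
    _ = B₁ := by rw [← hE₁def, ← Matrix.mul_assoc, hE₁R, Matrix.one_mul]
  have key1 : A₁₁ᴴ * (S₁₁⁻¹ * (E₁⁻¹ * B₁))
      = S₁₁⁻¹ * (A₁₁ * (E₁⁻¹ * B₁))
        - S₁₁⁻¹ * (B₁ * (J * (B₁ᴴ * (S₁₁⁻¹ * (E₁⁻¹ * B₁))))) := by
    calc A₁₁ᴴ * (S₁₁⁻¹ * (E₁⁻¹ * B₁))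
        = (S₁₁⁻¹ * S₁₁) * (A₁₁ᴴ * (S₁₁⁻¹ * (E₁⁻¹ * B₁))) := by rw [hW2, Matrix.one_mul]
    _ = S₁₁⁻¹ * ((S₁₁ * A₁₁ᴴ) * (S₁₁⁻¹ * (E₁⁻¹ * B₁))) := by
        rw [Matrix.mul_assoc, ← Matrix.mul_assoc S₁₁]
    _ = S₁₁⁻¹ * ((A₁₁ * S₁₁ - B₁ * J * B₁ᴴ) * (S₁₁⁻¹ * (E₁⁻¹ * B₁))) := by rw [hS11A]
    _ = S₁₁⁻¹ * (A₁₁ * (S₁₁ * (S₁₁⁻¹ * (E₁⁻¹ * B₁))))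
        - S₁₁⁻¹ * (B₁ * (J * (B₁ᴴ * (S₁₁⁻¹ * (E₁⁻¹ * B₁))))) := by
        simp only [Matrix.sub_mul, Matrix.mul_sub, Matrix.mul_assoc]
    _ = S₁₁⁻¹ * (A₁₁ * (E₁⁻¹ * B₁))
        - S₁₁⁻¹ * (B₁ * (J * (B₁ᴴ * (S₁₁⁻¹ * (E₁⁻¹ * B₁))))) := by
        rw [← Matrix.mul_assoc S₁₁ S₁₁⁻¹, hW1, Matrix.one_mul]
  have hAv : A₁₁ᴴ * (S₁₁⁻¹ * (E₁⁻¹ * B₁)) - lam • (S₁₁⁻¹ * (E₁⁻¹ * B₁))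
      = S₁₁⁻¹ * B₁
        - S₁₁⁻¹ * (B₁ * (J * (B₁ᴴ * (S₁₁⁻¹ * (E₁⁻¹ * B₁))))) := by
    rw [key1, ← Matrix.mul_smul]
    have hx : S₁₁⁻¹ * (A₁₁ * (E₁⁻¹ * B₁)) - S₁₁⁻¹ * (lam • (E₁⁻¹ * B₁)) = S₁₁⁻¹ * B₁ := by
      rw [← Matrix.mul_sub, hu]
    rw [← hx]
    abel
  have hstar : A₂₁ * (E₁⁻¹ * B₁) + E₂ * (S₂₁ * (S₁₁⁻¹ * (E₁⁻¹ * B₁)))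
      = S₂₁ * (S₁₁⁻¹ * B₁)
        + B₂ * (J * (B₁ᴴ * (S₁₁⁻¹ * (E₁⁻¹ * B₁))))
        - S₂₁ * (S₁₁⁻¹ * (B₁ * (J * (B₁ᴴ * (S₁₁⁻¹ * (E₁⁻¹ * B₁)))))) := by
    have e1 : E₂ * (S₂₁ * (S₁₁⁻¹ * (E₁⁻¹ * B₁)))
        = (A₂₂ * S₂₁) * (S₁₁⁻¹ * (E₁⁻¹ * B₁))
          - S₂₁ * (lam • (S₁₁⁻¹ * (E₁⁻¹ * B₁))) := by
      rw [hE₂def, Matrix.sub_mul, Matrix.smul_mul, Matrix.one_mul, Matrix.mul_assoc,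
        Matrix.mul_smul]
    rw [e1, hA22S]
    have e2 : (B₂ * J * B₁ᴴ - A₂₁ * S₁₁ + S₂₁ * A₁₁ᴴ) * (S₁₁⁻¹ * (E₁⁻¹ * B₁))
        = B₂ * (J * (B₁ᴴ * (S₁₁⁻¹ * (E₁⁻¹ * B₁))))
          - A₂₁ * (S₁₁ * (S₁₁⁻¹ * (E₁⁻¹ * B₁)))
          + S₂₁ * (A₁₁ᴴ * (S₁₁⁻¹ * (E₁⁻¹ * B₁))) := by
      simp only [Matrix.sub_mul, Matrix.add_mul, Matrix.mul_assoc]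
    rw [e2, ← Matrix.mul_assoc S₁₁ S₁₁⁻¹, hW1, Matrix.one_mul]
    have e3 : S₂₁ * (A₁₁ᴴ * (S₁₁⁻¹ * (E₁⁻¹ * B₁))) - S₂₁ * (lam • (S₁₁⁻¹ * (E₁⁻¹ * B₁)))
        = S₂₁ * (S₁₁⁻¹ * B₁)
          - S₂₁ * (S₁₁⁻¹ * (B₁ * (J * (B₁ᴴ * (S₁₁⁻¹ * (E₁⁻¹ * B₁)))))) := by
      rw [← Matrix.mul_sub, hAv, Matrix.mul_sub]
    calc A₂₁ * (E₁⁻¹ * B₁) +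
          (B₂ * (J * (B₁ᴴ * (S₁₁⁻¹ * (E₁⁻¹ * B₁)))) - A₂₁ * (E₁⁻¹ * B₁)
            + S₂₁ * (A₁₁ᴴ * (S₁₁⁻¹ * (E₁⁻¹ * B₁)))
            - S₂₁ * (lam • (S₁₁⁻¹ * (E₁⁻¹ * B₁))))
        = B₂ * (J * (B₁ᴴ * (S₁₁⁻¹ * (E₁⁻¹ * B₁))))
          + (S₂₁ * (A₁₁ᴴ * (S₁₁⁻¹ * (E₁⁻¹ * B₁)))
            - S₂₁ * (lam • (S₁₁⁻¹ * (E₁⁻¹ * B₁)))) := by abel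
    _ = _ := by rw [e3]; abel
  have g5 : E₂⁻¹ * (A₂₁ * (E₁⁻¹ * B₁))
      = E₂⁻¹ * (S₂₁ * (S₁₁⁻¹ * B₁))
        + E₂⁻¹ * (B₂ * (J * (B₁ᴴ * (S₁₁⁻¹ * (E₁⁻¹ * B₁)))))
        - E₂⁻¹ * (S₂₁ * (S₁₁⁻¹ * (B₁ * (J * (B₁ᴴ * (S₁₁⁻¹ * (E₁⁻¹ * B₁)))))))
        - S₂₁ * (S₁₁⁻¹ * (E₁⁻¹ * B₁)) := by
    have h : A₂₁ * (E₁⁻¹ * B₁)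
        = S₂₁ * (S₁₁⁻¹ * B₁)
          + B₂ * (J * (B₁ᴴ * (S₁₁⁻¹ * (E₁⁻¹ * B₁))))
          - S₂₁ * (S₁₁⁻¹ * (B₁ * (J * (B₁ᴴ * (S₁₁⁻¹ * (E₁⁻¹ * B₁))))))
          - E₂ * (S₂₁ * (S₁₁⁻¹ * (E₁⁻¹ * B₁))) := by rw [← hstar]; abel
    rw [h]
    have h2 : E₂⁻¹ * (E₂ * (S₂₁ * (S₁₁⁻¹ * (E₁⁻¹ * B₁))))
        = S₂₁ * (S₁₁⁻¹ * (E₁⁻¹ * B₁)) := by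
      rw [← Matrix.mul_assoc, hR₂E, Matrix.one_mul]
    simp only [Matrix.mul_sub, Matrix.mul_add, h2]
  -- now reduce the main goal to block form and finish
  rw [hT]
  have hMblk : fromBlocks A₁₁ 0 A₂₁ A₂₂
        - lam • (1 : Matrix (Fin n₁ ⊕ Fin n₂) (Fin n₁ ⊕ Fin n₂) ℂ)
      = fromBlocks E₁ 0 A₂₁ E₂ := by
    rw [← fromBlocks_one, fromBlocks_smul, fromBlocks_sub']
    rw [hE₁def, hE₂def]
    congr 1 <;> simp
  have hMinv : (fromBlocks E₁ 0 A₂₁ E₂)⁻¹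
      = fromBlocks E₁⁻¹ 0 (-(E₂⁻¹ * A₂₁ * E₁⁻¹)) E₂⁻¹ := by
    apply inv_eq_right_inv
    rw [fromBlocks_multiply, ← fromBlocks_one]
    refine fromBlocks_inj.mpr ⟨?_, ?_, ?_, ?_⟩
    · rw [hE₁R, Matrix.zero_mul, add_zero]
    · rw [Matrix.mul_zero, Matrix.zero_mul, add_zero]
    · rw [Matrix.mul_neg, ← Matrix.mul_assoc, ← Matrix.mul_assoc, hE₂R, Matrix.one_mul,
        add_neg_cancel]
    · rw [Matrix.mul_zero, hE₂R, zero_add]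
  rw [hMblk, hMinv]
  simp only [toBlocks_fromBlocks₂₂,
    conjTranspose_fromRows_eq_fromCols_conjTranspose,
    conjTranspose_fromCols_eq_fromRows_conjTranspose,
    conjTranspose_one, conjTranspose_zero,
    mul_fromCols, fromCols_mul_fromBlocks, fromBlocks_mul_fromRows,
    fromCols_mul_fromRows,
    Matrix.mul_zero, Matrix.zero_mul, Matrix.mul_one, Matrix.one_mul, add_zero, zero_add]
  simp only [Matrix.mul_add, Matrix.add_mul, Matrix.mul_sub, Matrix.sub_mul,
    Matrix.mul_neg, Matrix.neg_mul, Matrix.mul_assoc, Matrix.mul_one, Matrix.one_mul,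
    g2, g3, g4, g5, neg_neg]
  abel
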